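/- Fix an integer n ≥ 1 and q ∈ (−1,1], and let f ∈ L²(ℝ₊ⁿ) be symmetric. Then Σ_{σ∈S_{2n}, σ({1,…,n})∩{1,…,n}=∅} q^{inv(σ)} ∫_{P₂(σ)} (f⊗f) ⊗ (f⊗f) = q^{n²} ⟨f,f⟩_q², where P₂(σ), for σ ∈ S_{2n}, is the pairing {{2n+1−i, 2n+σ(i)} : 1≤i≤2n} of {1,…,4n} and (f⊗f)(t₁,…,t_{2n}) := f(t₁,…,tₙ)f(t_{n+1},…,t_{2n}). -/

import Mathlib

open MeasureTheory

noncomputable section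

/-- Lebesgue measure restricted to `ℝ₊ = [0,∞)`. -/
def mR : Measure ℝ := volume.restrict (Set.Ici (0 : ℝ))

/-- Lebesgue measure on `ℝ₊ⁿ`. -/
def μn (n : ℕ) : Measure (Fin n → ℝ) := Measure.pi fun _ => mR

/-- Number of inversions of a map `σ : Fin p → Fin m`:
`inv(σ) = Card {i < j : σ i > σ j}`. -/
def invCount {p m : ℕ} (σ : Fin p → Fin m) : ℕ :=
  (Finset.univ.filter fun ij : Fin p × Fin p => ij.1 < ij.2 ∧ σ ij.2 < σ ij.1).card

/-- The `q`-inner product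
`⟨f,g⟩_q = Σ_{σ ∈ S_n} q^{inv σ} ∫ f(t_{σ(1)},…,t_{σ(n)}) g(t₁,…,t_n) dt`. -/
def qInner (n : ℕ) (q : ℝ) (f g : (Fin n → ℝ) → ℝ) : ℝ :=
  ∑ σ : Equiv.Perm (Fin n),
    q ^ invCount (fun i => σ i) * ∫ t, f (fun i => t (σ i)) * g t ∂ μn n

/-- `f*`, the mirror of `f` : `f*(t₁,…,tₙ) = f(tₙ,…,t₁)`. -/
def mirror {n : ℕ} (f : (Fin n → ℝ) → ℝ) : (Fin n → ℝ) → ℝ := fun t => f fun i => t i.rev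

/-- The pairing integral `∫_{P₂(σ)} F ⊗ H` associated with the pairing
`P₂(σ) = {{N+1-i, N+σ(i)} : 1 ≤ i ≤ N}` of `{1,…,2N}`, namely
`∫ F(s₁,…,s_N) H(s_{N+1-σ⁻¹(1)},…,s_{N+1-σ⁻¹(N)}) ds`. -/
def P2Integral (N : ℕ) (σ : Equiv.Perm (Fin N)) (F H : (Fin N → ℝ) → ℝ) : ℝ :=
  ∫ s, F s * H (fun i => s (σ.symm i).rev) ∂ μn N

/-- `f` is symmetric: for every permutation `σ`, `f(t_{σ(1)},…,t_{σ(n)}) = f(t₁,…,tₙ)`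
for almost every `t`. -/
def SymmFn {n : ℕ} (f : (Fin n → ℝ) → ℝ) : Prop :=
  ∀ σ : Equiv.Perm (Fin n), ∀ᵐ t ∂ μn n, f (fun i => t (σ i)) = f t

/-- Safe coordinate access: `gv t k = t k` when `k < m`, and `0` otherwise. -/
def gv {m : ℕ} (t : Fin m → ℝ) (k : ℕ) : ℝ := if h : k < m then t ⟨k, h⟩ else 0

/-- The `p`-th contraction `f ⌢_p g`:
`(f ⌢_p g)(t₁,…,t_{n+m-2p}) = ∫ f(t₁,…,t_{n-p},s_p,…,s₁) g(s₁,…,s_p,t_{n-p+1},…,t_{n+m-2p}) ds`. -/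
def contr (n m p : ℕ) (f : (Fin n → ℝ) → ℝ) (g : (Fin m → ℝ) → ℝ) :
    (Fin (n + m - 2 * p) → ℝ) → ℝ :=
  fun t => ∫ s : Fin p → ℝ,
      f (fun i => if (i : ℕ) < n - p then gv t i else gv s (n - 1 - (i : ℕ))) *
      g (fun j => if (j : ℕ) < p then gv s j else gv t (n - p + ((j : ℕ) - p))) ∂ μn p

/-- `α(σ)` for a (strictly decreasing, 0-indexed) `σ : Fin p → Fin n`;
in 1-indexed terms `α(σ) = Σᵢ (n+1-σ(i)) - p(p+1)/2`. -/
def alphaA (n p : ℕ) (σ : Fin p → Fin n) : ℕ := (∑ i, (n - (σ i : ℕ))) - p * (p + 1) / 2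

/-- `β(σ)` for an (injective, 0-indexed) `σ : Fin p → Fin n`;
in 1-indexed terms `β(σ) = Σᵢ σ(i) - p(p+1)/2 + inv(σ)`. -/
def betaB (n p : ℕ) (σ : Fin p → Fin n) : ℕ :=
  ((∑ i, (σ i : ℕ)) - p * (p - 1) / 2) + invCount σ

/-- `f_q^{(p)}`, as a function of `(t₁,…,t_{n-p},s_p,…,s₁)`:
`Σ_{σ : {1,…,p} → {1,…,n} strictly decreasing} q^{α(σ)} f(x₁,…,xₙ)` where `x_{σ(i)} = s_i`
and the remaining coordinates, read increasingly, are `t₁,…,t_{n-p}`. -/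
def qexpDec (n p : ℕ) (q : ℝ) (f : (Fin n → ℝ) → ℝ) : (Fin n → ℝ) → ℝ :=
  fun u => ∑ σ ∈ Finset.univ.filter (fun σ : Fin p → Fin n => ∀ i j : Fin p, i < j → σ j < σ i),
    q ^ alphaA n p σ * f (fun j =>
      if ∃ i, σ i = j then
        ∑ i ∈ Finset.univ.filter (fun i => σ i = j), gv u (n - 1 - (i : ℕ))
      else gv u ((Finset.univ.filter fun j' : Fin n => j' < j ∧ ∀ i, σ i ≠ j').card))

/-- `f_q^{[p]}`, as a function of `(s₁,…,s_p,t₁,…,t_{n-p})`: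
`Σ_{σ : {1,…,p} → {1,…,n} injective} q^{β(σ)} f(x₁,…,xₙ)` where `x_{σ(i)} = s_i`
and the remaining coordinates, read increasingly, are `t₁,…,t_{n-p}`. -/
def qexpInj (n p : ℕ) (q : ℝ) (f : (Fin n → ℝ) → ℝ) : (Fin n → ℝ) → ℝ :=
  fun u => ∑ σ ∈ Finset.univ.filter (fun σ : Fin p → Fin n => Function.Injective σ),
    q ^ betaB n p σ * f (fun j =>
      if ∃ i, σ i = j then
        ∑ i ∈ Finset.univ.filter (fun i => σ i = j), gv u (i : ℕ)
      else gv u (p + (Finset.univ.filter fun j' : Fin n => j' < j ∧ ∀ i, σ i ≠ j').card))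

/-- The `q`-contraction `f ⊗_q^p g := f_q^{(p)} ⌢_p g_q^{[p]}`. -/
def qcontr (n m p : ℕ) (q : ℝ) (f : (Fin n → ℝ) → ℝ) (g : (Fin m → ℝ) → ℝ) :
    (Fin (n + m - 2 * p) → ℝ) → ℝ :=
  contr n m p (qexpDec n p q f) (qexpInj m p q g)

/-- Two (2-element) sets form a crossing: `{x₁,y₁}, {x₂,y₂}` with `x₁ < x₂ < y₁ < y₂`. -/
def Crossing (p₁ p₂ : Finset ℕ) : Prop :=
  ∃ x₁ ∈ p₁, ∃ y₁ ∈ p₁, ∃ x₂ ∈ p₂, ∃ y₂ ∈ p₂, x₁ < x₂ ∧ x₂ < y₁ ∧ y₁ < y₂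

/-- The number of crossings `Cr(π)` of a pairing `π` (each crossing counted once:
the pair containing the smallest point is listed first). -/
def crNum (π : Finset (Finset ℕ)) : ℕ := by
  classical exact ((π ×ˢ π).filter fun pp => Crossing pp.1 pp.2).card

/-- `π` is a pairing of `{0,…,N-1}`: a partition of it into 2-element sets. -/
def IsPairingOn (N : ℕ) (π : Finset (Finset ℕ)) : Prop :=
  (∀ pr ∈ π, pr.card = 2 ∧ pr ⊆ Finset.range N) ∧ ∀ x < N, ∃! pr, pr ∈ π ∧ x ∈ pr

/-- `off n i = n₁ + … + nᵢ`, the offset of the `(i+1)`-th block. -/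
def off (n : ℕ → ℕ) (i : ℕ) : ℕ := ∑ j ∈ Finset.range i, n j

/-- `π ∈ C₂(n₁ ⊗ … ⊗ n_r)`: `π` is a pairing of the ground set partitioned into the `r`
consecutive blocks of sizes `n 0, …, n (r-1)`, and every pair of `π` meets two distinct
blocks (no pair is contained in a single block). -/
def Respects (r : ℕ) (n : ℕ → ℕ) (π : Finset (Finset ℕ)) : Prop :=
  IsPairingOn (off n r) π ∧
    ∀ pr ∈ π, ¬ ∃ i < r, ∀ x ∈ pr, off n i ≤ x ∧ x < off n (i + 1)

/-- The (finite) set `C₂(n₁ ⊗ … ⊗ n_r)` of all respecting pairings. -/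
def respPairings (r : ℕ) (n : ℕ → ℕ) : Finset (Finset (Finset ℕ)) := by
  classical exact ((Finset.range (off n r)).powerset.powerset).filter fun π => Respects r n π

/-- The pairing integral `∫_π F`: one integration variable per pair of `π`, the two
coordinates of each pair being set equal to that variable, integrated over `ℝ₊^{N/2}`. -/
def pairingIntegral (π : Finset (Finset ℕ)) (F : (ℕ → ℝ) → ℝ) : ℝ :=
  ∫ u : {pr // pr ∈ π} → ℝ,
    F (fun x => ∑ pr ∈ Finset.univ.filter (fun pr : {pr // pr ∈ π} => x ∈ pr.1), u pr)
    ∂ Measure.pi fun _ => mR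

/-- The product `f₁(t₁,…,t_{n₁}) f₂(t_{n₁+1},…,t_{n₁+n₂}) ⋯ f_r(…,t_n)` as a function of
`t : ℕ → ℝ` (blocks of sizes `n 0, …, n (r-1)`). -/
def prodBlocks (r : ℕ) (n : ℕ → ℕ) (f : ∀ i, (Fin (n i) → ℝ) → ℝ) : (ℕ → ℝ) → ℝ :=
  fun t => ∏ i ∈ Finset.range r, f i (fun j => t (off n i + (j : ℕ)))

/-- `P₂(σ) = {{n+1-i, n+σ(i)} : 1 ≤ i ≤ n}` as a pairing of `{0,…,2n-1}` (0-indexed). -/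
def P2set (n : ℕ) (σ : Equiv.Perm (Fin n)) : Finset (Finset ℕ) :=
  Finset.univ.image fun i : Fin n => ({n - 1 - (i : ℕ), n + ((σ i : Fin n) : ℕ)} : Finset ℕ)

/-- The map `φ` in the construction of `F(σ₁,σ₂,π')`: the unpaired points of the first two
blocks are mapped increasingly onto `{0,…,n₀+n₁-2p-1}` and every later point `x` is mapped
to `x - 2p`. -/
def phiF (n₀ n₁ p : ℕ) (σ₁ : Fin p → Fin n₀) (σ₂ : Fin p → Fin n₁) (x : ℕ) : ℕ :=
  if x < n₀ + n₁ then
    ((Finset.range x).filter fun y =>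
      (∀ i, ((σ₁ i : ℕ)) ≠ y) ∧ (∀ i, n₀ + (σ₂ i : ℕ) ≠ y)).card
  else x - 2 * p

/-- The pairing `F(σ₁,σ₂,π')` of the ground set `{0,…,N-1}`: it contains the `p` pairs
`{σ₁(i), n₀+σ₂(i)}`, and its remaining pairs are exactly the `φ`-preimages of the pairs
of `π'`. -/
def Fpair (N n₀ n₁ p : ℕ) (σ₁ : Fin p → Fin n₀) (σ₂ : Fin p → Fin n₁)
    (π' : Finset (Finset ℕ)) : Finset (Finset ℕ) :=
  (Finset.univ.image fun i : Fin p => ({(σ₁ i : ℕ), n₀ + (σ₂ i : ℕ)} : Finset ℕ)) ∪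
  π'.image fun pr => (Finset.range N).filter fun x =>
    (x < n₀ + n₁ → (∀ i, (σ₁ i : ℕ) ≠ x) ∧ (∀ i, n₀ + (σ₂ i : ℕ) ≠ x)) ∧
    phiF n₀ n₁ p σ₁ σ₂ x ∈ pr

/-- Block sizes `(n₁+n₂-2p, n₃, …, n_r)` after contracting the first two blocks. -/
def contractedSizes (n : ℕ → ℕ) (p : ℕ) : ℕ → ℕ
  | 0 => n 0 + n 1 - 2 * p
  | k + 1 => n (k + 2)

/-- Kernels `(f₁ ⊗_q^p f₂, f₃, …, f_r)` after contracting the first two kernels. -/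
def contractedKernels (n : ℕ → ℕ) (p : ℕ) (q : ℝ) (f : ∀ i, (Fin (n i) → ℝ) → ℝ) :
    ∀ j, (Fin (contractedSizes n p j) → ℝ) → ℝ
  | 0 => qcontr (n 0) (n 1) p q (f 0) (f 1)
  | k + 1 => f (k + 2)

end
noncomputable section AuxStmt13

open MeasureTheory Equiv

instance : SigmaFinite mR := by unfold mR; infer_instance
instance (n : ℕ) : SigmaFinite (μn n) := by unfold μn; infer_instance

/-- reindexing equivalence -/
def E13 (n : ℕ) : Fin (2 * n) ≃ (Fin n ⊕ Fin n) :=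
  (finCongr (two_mul n)).trans finSumFinEquiv.symm

lemma E13_symm_inl (n : ℕ) (i : Fin n) : (((E13 n).symm (Sum.inl i) : Fin (2 * n)) : ℕ) = i := by
  simp [E13]

lemma E13_symm_inr (n : ℕ) (i : Fin n) :
    (((E13 n).symm (Sum.inr i) : Fin (2 * n)) : ℕ) = n + i := by
  simp [E13]; omega

lemma E13_apply_lt {n : ℕ} (x : Fin (2 * n)) (h : (x : ℕ) < n) :
    (E13 n) x = Sum.inl ⟨(x : ℕ), h⟩ := by
  rw [Equiv.apply_eq_iff_eq_symm_apply]
  exact Fin.ext (by rw [E13_symm_inl])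

lemma E13_apply_ge {n : ℕ} (x : Fin (2 * n)) (h : ¬ (x : ℕ) < n) :
    (E13 n) x = Sum.inr ⟨(x : ℕ) - n, by have := x.isLt; omega⟩ := by
  rw [Equiv.apply_eq_iff_eq_symm_apply]
  refine Fin.ext ?_
  rw [E13_symm_inr]; simp only [Fin.val_mk]; omega

/-- the block-swapping permutation -/
def Phi13 (n : ℕ) (a b : Equiv.Perm (Fin n)) : Equiv.Perm (Fin (2 * n)) :=
  Equiv.permCongr (E13 n).symm ((Equiv.sumCongr a b).trans (Equiv.sumComm (Fin n) (Fin n)))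

lemma Phi13_apply_lt {n : ℕ} (a b : Equiv.Perm (Fin n)) (x : Fin (2 * n)) (h : (x : ℕ) < n) :
    ((Phi13 n a b x : Fin (2 * n)) : ℕ) = n + a ⟨(x : ℕ), h⟩ := by
  rw [Phi13, Equiv.permCongr_apply, Equiv.symm_symm, E13_apply_lt x h]
  simp [E13_symm_inr]

lemma Phi13_apply_ge {n : ℕ} (a b : Equiv.Perm (Fin n)) (x : Fin (2 * n)) (h : ¬ (x : ℕ) < n) :
    ((Phi13 n a b x : Fin (2 * n)) : ℕ) = b ⟨(x : ℕ) - n, by have := x.isLt; omega⟩ := by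
  rw [Phi13, Equiv.permCongr_apply, Equiv.symm_symm, E13_apply_ge x h]
  simp [E13_symm_inl]

lemma Phi13_symm {n : ℕ} (a b : Equiv.Perm (Fin n)) :
    (Phi13 n a b).symm = Phi13 n b⁻¹ a⁻¹ := by
  refine Equiv.ext fun x => ?_
  rw [Equiv.symm_apply_eq]
  set y := Phi13 n b⁻¹ a⁻¹ x with hy
  by_cases h : (x : ℕ) < n
  · have h1 : ((y : Fin (2 * n)) : ℕ) = n + ((b⁻¹ ⟨(x : ℕ), h⟩ : Fin n) : ℕ) :=
      Phi13_apply_lt _ _ _ h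
    refine Fin.ext ?_
    rw [Phi13_apply_ge a b y (by omega)]
    have h2 : (⟨((y : Fin (2 * n)) : ℕ) - n, by have := y.isLt; omega⟩ : Fin n)
        = b⁻¹ ⟨(x : ℕ), h⟩ := Fin.ext (by simp only [Fin.val_mk]; omega)
    rw [h2, ← Equiv.Perm.mul_apply, mul_inv_cancel, Equiv.Perm.one_apply]
  · have h1 : ((y : Fin (2 * n)) : ℕ)
        = ((a⁻¹ ⟨(x : ℕ) - n, by have := x.isLt; omega⟩ : Fin n) : ℕ) :=
      Phi13_apply_ge _ _ _ h
    refine Fin.ext ?_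
    rw [Phi13_apply_lt a b y (by rw [h1]; exact (a⁻¹ _).isLt)]
    have h2 : (⟨((y : Fin (2 * n)) : ℕ), by rw [h1]; exact (a⁻¹ _).isLt⟩ : Fin n)
        = a⁻¹ ⟨(x : ℕ) - n, by have := x.isLt; omega⟩ := Fin.ext (by simp only [Fin.val_mk]; exact h1)
    rw [h2, ← Equiv.Perm.mul_apply, mul_inv_cancel, Equiv.Perm.one_apply]
    simp only [Fin.val_mk]
    have := x.isLt; omega

end AuxStmt13
section Aux2
open Equiv

lemma invCount_eq_sum {p m : ℕ} (g : Fin p → Fin m) :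
    invCount g = ∑ x : Fin p, ∑ y : Fin p, if x < y ∧ g y < g x then 1 else 0 := by
  rw [invCount, Finset.card_filter, Fintype.sum_prod_type]

lemma Phi13_Esymm_inl {n : ℕ} (a b : Equiv.Perm (Fin n)) (i : Fin n) :
    ((Phi13 n a b ((E13 n).symm (Sum.inl i)) : Fin (2 * n)) : ℕ) = n + a i := by
  have h : (((E13 n).symm (Sum.inl i) : Fin (2 * n)) : ℕ) < n := by
    rw [E13_symm_inl]; exact i.isLt
  rw [Phi13_apply_lt a b _ h]
  have h2 : (⟨(((E13 n).symm (Sum.inl i) : Fin (2 * n)) : ℕ), h⟩ : Fin n) = i :=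
    Fin.ext (by simp only [Fin.val_mk]; exact E13_symm_inl n i)
  rw [h2]

lemma Phi13_Esymm_inr {n : ℕ} (a b : Equiv.Perm (Fin n)) (j : Fin n) :
    ((Phi13 n a b ((E13 n).symm (Sum.inr j)) : Fin (2 * n)) : ℕ) = b j := by
  have h : ¬ (((E13 n).symm (Sum.inr j) : Fin (2 * n)) : ℕ) < n := by
    rw [E13_symm_inr]; omega
  rw [Phi13_apply_ge a b _ h]
  have h2 : (⟨(((E13 n).symm (Sum.inr j) : Fin (2 * n)) : ℕ) - n,
      by have := ((E13 n).symm (Sum.inr j)).isLt; omega⟩ : Fin n) = j :=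
    Fin.ext (by simp only [Fin.val_mk]; rw [E13_symm_inr]; omega)
  rw [h2]

lemma invCount_Phi13 (n : ℕ) (a b : Equiv.Perm (Fin n)) :
    invCount (fun i => Phi13 n a b i)
      = n * n + invCount (fun i => a i) + invCount (fun i => b i) := by
  classical
  have reidx : ∀ F : Fin (2 * n) → ℕ,
      ∑ x, F x = (∑ i : Fin n, F ((E13 n).symm (Sum.inl i)))
        + ∑ i : Fin n, F ((E13 n).symm (Sum.inr i)) := fun F => by
    rw [← Equiv.sum_comp (E13 n).symm F, Fintype.sum_sum_type]
  simp only [invCount_eq_sum]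
  set c : Fin (2 * n) → Fin (2 * n) → ℕ := fun x y =>
    if x < y ∧ Phi13 n a b y < Phi13 n a b x then 1 else 0 with hc
  have step1 : ∑ x : Fin (2 * n), ∑ y : Fin (2 * n), c x y
      = (∑ i : Fin n, ∑ y : Fin (2 * n), c ((E13 n).symm (Sum.inl i)) y)
        + ∑ i : Fin n, ∑ y : Fin (2 * n), c ((E13 n).symm (Sum.inr i)) y :=
    reidx _
  have step2 : ∀ x : Fin (2 * n), ∑ y : Fin (2 * n), c x y
      = (∑ j : Fin n, c x ((E13 n).symm (Sum.inl j)))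
        + ∑ j : Fin n, c x ((E13 n).symm (Sum.inr j)) := fun x => reidx _
  have hll : ∀ i j : Fin n, c ((E13 n).symm (Sum.inl i)) ((E13 n).symm (Sum.inl j))
      = if i < j ∧ a j < a i then 1 else 0 := by
    intro i j
    refine if_congr ?_ rfl rfl
    simp only [Fin.lt_def, E13_symm_inl, Phi13_Esymm_inl]
    omega
  have hlr : ∀ i j : Fin n, c ((E13 n).symm (Sum.inl i)) ((E13 n).symm (Sum.inr j)) = 1 := by
    intro i j
    refine if_pos ?_
    constructor
    · rw [Fin.lt_def, E13_symm_inl, E13_symm_inr]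
      have := i.isLt; omega
    · rw [Fin.lt_def, Phi13_Esymm_inl, Phi13_Esymm_inr]
      have := (b j).isLt; omega
  have hrl : ∀ i j : Fin n, c ((E13 n).symm (Sum.inr i)) ((E13 n).symm (Sum.inl j)) = 0 := by
    intro i j
    refine if_neg ?_
    rw [Fin.lt_def, E13_symm_inl, E13_symm_inr]
    rintro ⟨h1, -⟩
    have := j.isLt; omega
  have hrr : ∀ i j : Fin n, c ((E13 n).symm (Sum.inr i)) ((E13 n).symm (Sum.inr j))
      = if i < j ∧ b j < b i then 1 else 0 := by
    intro i j
    refine if_congr ?_ rfl rfl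
    simp only [Fin.lt_def, E13_symm_inr, Phi13_Esymm_inr]
    omega
  rw [step1]
  rw [Finset.sum_congr rfl (fun i _ => step2 _), Finset.sum_congr rfl (fun i _ => step2 _)]
  simp only [hll, hlr, hrl, hrr]
  simp [Finset.sum_add_distrib, mul_comm]
  omega

end Aux2
noncomputable section Aux3
open MeasureTheory Equiv

/-- measurable equivalence splitting `ℝ^{2n}` into two halves -/
def me13 (n : ℕ) : ((Fin n → ℝ) × (Fin n → ℝ)) ≃ᵐ (Fin (2 * n) → ℝ) :=
  (MeasurableEquiv.sumPiEquivProdPi (fun _ : Fin n ⊕ Fin n => ℝ)).symm.trans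
    (MeasurableEquiv.piCongrLeft (fun _ : Fin (2 * n) => ℝ) (E13 n).symm)

lemma me13_measurePreserving (n : ℕ) :
    MeasurePreserving (me13 n) ((μn n).prod (μn n)) (μn (2 * n)) := by
  have h1 := measurePreserving_sumPiEquivProdPi_symm
    (X := fun _ : Fin n ⊕ Fin n => ℝ) (fun _ => mR)
  have h2 := measurePreserving_piCongrLeft (fun _ : Fin (2 * n) => mR) (E13 n).symm
  exact h2.comp h1

lemma me13_apply_inl (n : ℕ) (x y : Fin n → ℝ) (i : Fin n) :
    me13 n (x, y) ((E13 n).symm (Sum.inl i)) = x i := by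
  show (MeasurableEquiv.piCongrLeft (fun _ : Fin (2 * n) => ℝ) (E13 n).symm)
      ((MeasurableEquiv.sumPiEquivProdPi (fun _ : Fin n ⊕ Fin n => ℝ)).symm (x, y))
      ((E13 n).symm (Sum.inl i)) = x i
  rw [MeasurableEquiv.coe_piCongrLeft, Equiv.piCongrLeft_apply_apply]
  rfl

lemma me13_apply_inr (n : ℕ) (x y : Fin n → ℝ) (i : Fin n) :
    me13 n (x, y) ((E13 n).symm (Sum.inr i)) = y i := by
  show (MeasurableEquiv.piCongrLeft (fun _ : Fin (2 * n) => ℝ) (E13 n).symm)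
      ((MeasurableEquiv.sumPiEquivProdPi (fun _ : Fin n ⊕ Fin n => ℝ)).symm (x, y))
      ((E13 n).symm (Sum.inr i)) = y i
  rw [MeasurableEquiv.coe_piCongrLeft, Equiv.piCongrLeft_apply_apply]
  rfl

lemma me13_fst {n : ℕ} (x y : Fin n → ℝ) (k : Fin (2 * n)) (h : (k : ℕ) < n) :
    me13 n (x, y) k = x ⟨(k : ℕ), h⟩ := by
  have hk : k = (E13 n).symm (Sum.inl ⟨(k : ℕ), h⟩) :=
    Fin.ext (by rw [E13_symm_inl])
  conv_lhs => rw [hk]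
  rw [me13_apply_inl]

lemma me13_snd {n : ℕ} (x y : Fin n → ℝ) (k : Fin (2 * n)) (h : ¬ (k : ℕ) < n) :
    me13 n (x, y) k = y ⟨(k : ℕ) - n, by have := k.isLt; omega⟩ := by
  have hk : k = (E13 n).symm (Sum.inr ⟨(k : ℕ) - n, by have := k.isLt; omega⟩) :=
    Fin.ext (by rw [E13_symm_inr]; simp only [Fin.val_mk]; omega)
  conv_lhs => rw [hk]
  rw [me13_apply_inr]

end Aux3
noncomputable section Aux4
open MeasureTheory Equiv

lemma symm_integral {n : ℕ} (f : (Fin n → ℝ) → ℝ) (hsym : SymmFn f) (ρ : Equiv.Perm (Fin n)) :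
    ∫ t, f t * f (fun i => t (ρ i)) ∂ μn n = ∫ t, f t * f t ∂ μn n := by
  refine integral_congr_ae ?_
  filter_upwards [hsym ρ] with t ht
  rw [ht]

lemma qInner_eq {n : ℕ} (q : ℝ) (f : (Fin n → ℝ) → ℝ) (hsym : SymmFn f) :
    qInner n q f f
      = (∑ σ : Equiv.Perm (Fin n), q ^ invCount (fun i => σ i)) * ∫ t, f t * f t ∂ μn n := by
  rw [qInner, Finset.sum_mul]
  refine Finset.sum_congr rfl fun σ _ => ?_
  congr 1
  refine integral_congr_ae ?_
  filter_upwards [hsym σ] with t ht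
  rw [ht]

lemma P2term {n : ℕ} (f : (Fin n → ℝ) → ℝ) (hsym : SymmFn f) (a b : Equiv.Perm (Fin n)) :
    P2Integral (2 * n) (Phi13 n a b)
      (fun t => f (fun i => gv t (i : ℕ)) * f (fun i => gv t (n + (i : ℕ))))
      (fun t => f (fun i => gv t (i : ℕ)) * f (fun i => gv t (n + (i : ℕ))))
      = (∫ t, f t * f t ∂ μn n) * ∫ t, f t * f t ∂ μn n := by
  set ρb : Equiv.Perm (Fin n) := (b⁻¹ : Equiv.Perm (Fin n)).trans Fin.revPerm with hρb
  set ρa : Equiv.Perm (Fin n) := (a⁻¹ : Equiv.Perm (Fin n)).trans Fin.revPerm with hρa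
  have e1 : ∀ x y : Fin n → ℝ, (fun i : Fin n => gv (me13 n (x, y)) (i : ℕ)) = x := by
    intro x y; funext i
    have h2n : (i : ℕ) < 2 * n := by have := i.isLt; omega
    rw [gv, dif_pos h2n, me13_fst x y _ (show ((⟨(i : ℕ), h2n⟩ : Fin (2 * n)) : ℕ) < n from i.isLt)]
  have e2 : ∀ x y : Fin n → ℝ, (fun i : Fin n => gv (me13 n (x, y)) (n + (i : ℕ))) = y := by
    intro x y; funext i
    have h2n : n + (i : ℕ) < 2 * n := by have := i.isLt; omega
    rw [gv, dif_pos h2n, me13_snd x y _ (show ¬ ((⟨n + (i : ℕ), h2n⟩ : Fin (2 * n)) : ℕ) < n by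
      simp only [Fin.val_mk]; omega)]
    exact congrArg y (Fin.ext (by simp only [Fin.val_mk]; omega))
  have e3 : ∀ x y : Fin n → ℝ,
      (fun i : Fin n => gv (fun k : Fin (2 * n) =>
          me13 n (x, y) (((Phi13 n a b).symm k).rev)) (i : ℕ))
        = fun i => x (ρb i) := by
    intro x y; funext i
    have h2n : (i : ℕ) < 2 * n := by have := i.isLt; omega
    rw [gv, dif_pos h2n]
    simp only [Phi13_symm]
    have hi : (⟨((⟨(i : ℕ), h2n⟩ : Fin (2 * n)) : ℕ), i.isLt⟩ : Fin n) = i := Fin.ext rfl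
    have hval : ((Phi13 n b⁻¹ a⁻¹ ⟨(i : ℕ), h2n⟩ : Fin (2 * n)) : ℕ) = n + (b⁻¹ i : ℕ) := by
      rw [Phi13_apply_lt b⁻¹ a⁻¹ _ i.isLt, hi]
    have hrev : (((Phi13 n b⁻¹ a⁻¹ ⟨(i : ℕ), h2n⟩).rev : Fin (2 * n)) : ℕ)
        = n - 1 - (b⁻¹ i : ℕ) := by
      rw [Fin.val_rev, hval]; omega
    rw [me13_fst x y _ (show (((Phi13 n b⁻¹ a⁻¹ ⟨(i : ℕ), h2n⟩).rev : Fin (2 * n)) : ℕ) < n by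
      rw [hrev]; have := (b⁻¹ i).isLt; omega)]
    refine congrArg x (Fin.ext ?_)
    show (((Phi13 n b⁻¹ a⁻¹ ⟨(i : ℕ), h2n⟩).rev : Fin (2 * n)) : ℕ) = ((b⁻¹ i).rev : ℕ)
    rw [hrev, Fin.val_rev]
    have := (b⁻¹ i).isLt; omega
  have e4 : ∀ x y : Fin n → ℝ,
      (fun j : Fin n => gv (fun k : Fin (2 * n) =>
          me13 n (x, y) (((Phi13 n a b).symm k).rev)) (n + (j : ℕ)))
        = fun j => y (ρa j) := by
    intro x y; funext j
    have h2n : n + (j : ℕ) < 2 * n := by have := j.isLt; omega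
    rw [gv, dif_pos h2n]
    simp only [Phi13_symm]
    have hnl : ¬ ((⟨n + (j : ℕ), h2n⟩ : Fin (2 * n)) : ℕ) < n := by
      simp only [Fin.val_mk]; omega
    have hj : (⟨((⟨n + (j : ℕ), h2n⟩ : Fin (2 * n)) : ℕ) - n,
        by have := (⟨n + (j : ℕ), h2n⟩ : Fin (2 * n)).isLt; omega⟩ : Fin n) = j :=
      Fin.ext (by simp only [Fin.val_mk]; omega)
    have hval : ((Phi13 n b⁻¹ a⁻¹ ⟨n + (j : ℕ), h2n⟩ : Fin (2 * n)) : ℕ) = (a⁻¹ j : ℕ) := by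
      rw [Phi13_apply_ge b⁻¹ a⁻¹ _ hnl, hj]
    have hrev : (((Phi13 n b⁻¹ a⁻¹ ⟨n + (j : ℕ), h2n⟩).rev : Fin (2 * n)) : ℕ)
        = 2 * n - 1 - (a⁻¹ j : ℕ) := by
      rw [Fin.val_rev, hval]; omega
    rw [me13_snd x y _ (show ¬ (((Phi13 n b⁻¹ a⁻¹ ⟨n + (j : ℕ), h2n⟩).rev : Fin (2 * n)) : ℕ) < n by
      rw [hrev]; have := (a⁻¹ j).isLt; omega)]
    refine congrArg y (Fin.ext ?_)
    show (((Phi13 n b⁻¹ a⁻¹ ⟨n + (j : ℕ), h2n⟩).rev : Fin (2 * n)) : ℕ) - n = ((a⁻¹ j).rev : ℕ)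
    rw [hrev, Fin.val_rev]
    have := (a⁻¹ j).isLt; omega
  rw [P2Integral]
  rw [← (me13_measurePreserving n).integral_comp']
  calc ∫ p : (Fin n → ℝ) × (Fin n → ℝ),
        (f (fun i => gv (me13 n p) (i : ℕ)) * f (fun i => gv (me13 n p) (n + (i : ℕ)))) *
          (f (fun i => gv (fun k => me13 n p (((Phi13 n a b).symm k).rev)) (i : ℕ)) *
           f (fun i => gv (fun k => me13 n p (((Phi13 n a b).symm k).rev)) (n + (i : ℕ))))
        ∂ (μn n).prod (μn n)
      = ∫ p : (Fin n → ℝ) × (Fin n → ℝ),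
          (fun x => f x * f (fun i => x (ρb i))) p.1 *
            (fun y => f y * f (fun i => y (ρa i))) p.2 ∂ (μn n).prod (μn n) := by
        refine integral_congr_ae (Filter.Eventually.of_forall fun p => ?_)
        obtain ⟨x, y⟩ := p
        simp only [e1, e2, e3, e4]
        ring
    _ = (∫ x, f x * f (fun i => x (ρb i)) ∂ μn n) * ∫ y, f y * f (fun i => y (ρa i)) ∂ μn n :=
        integral_prod_mul (μ := μn n) (ν := μn n) (fun x => f x * f (fun i => x (ρb i))) (fun y => f y * f (fun i => y (ρa i)))
    _ = (∫ t, f t * f t ∂ μn n) * ∫ t, f t * f t ∂ μn n := by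
        rw [symm_integral f hsym ρb, symm_integral f hsym ρa]

end Aux4
section Aux5
open Equiv Finset

lemma Phi13_mem (n : ℕ) (a b : Equiv.Perm (Fin n)) :
    ((Finset.univ.filter fun i : Fin (2 * n) => (i : ℕ) < n).image (fun i => Phi13 n a b i)) ∩
      (Finset.univ.filter fun i : Fin (2 * n) => (i : ℕ) < n) = ∅ := by
  rw [Finset.eq_empty_iff_forall_notMem]
  intro x hx
  rw [Finset.mem_inter, Finset.mem_image] at hx
  obtain ⟨⟨i, hi, rfl⟩, hlt⟩ := hx
  rw [Finset.mem_filter] at hi hlt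
  have h := Phi13_apply_lt a b i hi.2
  have := hlt.2
  omega

lemma Phi13_fst_inj {n : ℕ} {a b a' b' : Equiv.Perm (Fin n)}
    (h : Phi13 n a b = Phi13 n a' b') : a = a' := by
  refine Equiv.ext fun i => ?_
  have lt : (i : ℕ) < 2 * n := by have := i.isLt; omega
  have h1 := Phi13_apply_lt a b ⟨(i : ℕ), lt⟩ i.isLt
  have h2 := Phi13_apply_lt a' b' ⟨(i : ℕ), lt⟩ i.isLt
  rw [h] at h1
  have hfin : (⟨((⟨(i : ℕ), lt⟩ : Fin (2 * n)) : ℕ), i.isLt⟩ : Fin n) = i := Fin.ext rfl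
  rw [hfin] at h1 h2
  refine Fin.ext ?_
  omega

lemma Phi13_inj {n : ℕ} {a b a' b' : Equiv.Perm (Fin n)}
    (h : Phi13 n a b = Phi13 n a' b') : a = a' ∧ b = b' := by
  refine ⟨Phi13_fst_inj h, inv_injective (Phi13_fst_inj (a := b⁻¹) (b := a⁻¹) (a' := b'⁻¹) (b' := a'⁻¹) ?_)⟩
  rw [← Phi13_symm, ← Phi13_symm, h]

lemma Phi13_surj {n : ℕ} (σ : Equiv.Perm (Fin (2 * n)))
    (hσ : ((Finset.univ.filter fun i : Fin (2 * n) => (i : ℕ) < n).image (fun i => σ i)) ∩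
      (Finset.univ.filter fun i : Fin (2 * n) => (i : ℕ) < n) = ∅) :
    ∃ a b : Equiv.Perm (Fin n), Phi13 n a b = σ := by
  classical
  have h1 : ∀ x : Fin (2 * n), (x : ℕ) < n → ¬ ((σ x : ℕ) < n) := by
    intro x hx hlt
    have hmem : σ x ∈ ((Finset.univ.filter fun i : Fin (2 * n) => (i : ℕ) < n).image
        (fun i => σ i)) ∩ (Finset.univ.filter fun i : Fin (2 * n) => (i : ℕ) < n) :=
      Finset.mem_inter.mpr ⟨Finset.mem_image.mpr ⟨x,
        Finset.mem_filter.mpr ⟨Finset.mem_univ _, hx⟩, rfl⟩,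
        Finset.mem_filter.mpr ⟨Finset.mem_univ _, hlt⟩⟩
    rw [hσ] at hmem
    exact Finset.notMem_empty _ hmem
  set A : Finset (Fin (2 * n)) := Finset.univ.filter (fun i : Fin (2 * n) => (i : ℕ) < n) with hAdef
  set B : Finset (Fin (2 * n)) := Finset.univ.filter
    (fun i : Fin (2 * n) => ¬ (i : ℕ) < n) with hBdef
  have hA : A.card = n := by
    have : A = Finset.map ⟨fun i : Fin n => (⟨(i : ℕ), by have := i.isLt; omega⟩ : Fin (2 * n)),
        fun i j hij => by apply Fin.ext; have h := congrArg Fin.val hij; simpa using h⟩ Finset.univ := by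
      ext x
      simp only [hAdef, Finset.mem_map, Finset.mem_filter, Finset.mem_univ, true_and,
        Function.Embedding.coeFn_mk]
      constructor
      · intro hx; exact ⟨⟨(x : ℕ), hx⟩, Fin.ext rfl⟩
      · rintro ⟨i, -, rfl⟩; exact i.isLt
    rw [this, Finset.card_map, Finset.card_univ, Fintype.card_fin]
  have hAB : A.card + B.card = 2 * n := by
    rw [hAdef, hBdef, Finset.card_filter_add_card_filter_not, Finset.card_univ,
      Fintype.card_fin]
  have hB : B.card = n := by omega
  have himg : A.image (fun x => σ x) ⊆ B := by
    intro y hy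
    rw [Finset.mem_image] at hy
    obtain ⟨x, hx, rfl⟩ := hy
    rw [hAdef, Finset.mem_filter] at hx
    rw [hBdef, Finset.mem_filter]
    exact ⟨Finset.mem_univ _, h1 x hx.2⟩
  have heq : A.image (fun x => σ x) = B :=
    Finset.eq_of_subset_of_card_le himg (by
      rw [Finset.card_image_of_injective _ σ.injective, hA, hB])
  have h2 : ∀ x : Fin (2 * n), ¬ (x : ℕ) < n → (σ x : ℕ) < n := by
    intro x hx
    by_contra hge
    have hxB : σ x ∈ B := by rw [hBdef, Finset.mem_filter]; exact ⟨Finset.mem_univ _, hge⟩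
    rw [← heq, Finset.mem_image] at hxB
    obtain ⟨i, hi, hix⟩ := hxB
    have hieq : i = x := σ.injective hix
    rw [hAdef, Finset.mem_filter] at hi
    rw [hieq] at hi
    exact hx hi.2
  have lt2n : ∀ i : Fin n, (i : ℕ) < 2 * n := fun i => by have := i.isLt; omega
  have ltn2 : ∀ i : Fin n, n + (i : ℕ) < 2 * n := fun i => by have := i.isLt; omega
  have hfa_lt : ∀ i : Fin n, (σ ⟨(i : ℕ), lt2n i⟩ : ℕ) - n < n := by
    intro i
    have hge := h1 ⟨(i : ℕ), lt2n i⟩ i.isLt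
    have := (σ ⟨(i : ℕ), lt2n i⟩).isLt
    omega
  have hfb_lt : ∀ i : Fin n, (σ ⟨n + (i : ℕ), ltn2 i⟩ : ℕ) < n := by
    intro i
    exact h2 _ (by simp only [Fin.val_mk]; omega)
  have hainj : Function.Injective (fun i : Fin n => (⟨(σ ⟨(i : ℕ), lt2n i⟩ : ℕ) - n,
      hfa_lt i⟩ : Fin n)) := by
    intro i j hij
    have hv := congrArg Fin.val hij
    simp only [Fin.val_mk] at hv
    have hi := h1 ⟨(i : ℕ), lt2n i⟩ i.isLt
    have hj := h1 ⟨(j : ℕ), lt2n j⟩ j.isLt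
    have hσv : (σ ⟨(i : ℕ), lt2n i⟩ : ℕ) = (σ ⟨(j : ℕ), lt2n j⟩ : ℕ) := by omega
    have heq2 := σ.injective (Fin.ext hσv)
    have hv3 := congrArg Fin.val heq2
    simp only [Fin.val_mk] at hv3
    exact Fin.ext hv3
  have hbinj : Function.Injective (fun i : Fin n => (⟨(σ ⟨n + (i : ℕ), ltn2 i⟩ : ℕ),
      hfb_lt i⟩ : Fin n)) := by
    intro i j hij
    have hv := congrArg Fin.val hij
    simp only [Fin.val_mk] at hv
    have := σ.injective (Fin.ext hv)
    have hv2 := congrArg Fin.val this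
    simp only [Fin.val_mk] at hv2
    exact Fin.ext (by omega)
  refine ⟨Equiv.ofBijective _ (Finite.injective_iff_bijective.mp hainj),
    Equiv.ofBijective _ (Finite.injective_iff_bijective.mp hbinj), ?_⟩
  refine Equiv.ext fun x => ?_
  refine Fin.ext ?_
  by_cases hx : (x : ℕ) < n
  · rw [Phi13_apply_lt _ _ x hx]
    have hval : ((Equiv.ofBijective _ (Finite.injective_iff_bijective.mp hainj))
        ⟨(x : ℕ), hx⟩ : ℕ) = (σ ⟨((⟨(x : ℕ), hx⟩ : Fin n) : ℕ), lt2n ⟨(x : ℕ), hx⟩⟩ : ℕ) - n :=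
      rfl
    have hxx : (⟨((⟨(x : ℕ), hx⟩ : Fin n) : ℕ), lt2n ⟨(x : ℕ), hx⟩⟩ : Fin (2 * n)) = x :=
      Fin.ext rfl
    rw [hval, hxx]
    have := h1 x hx
    have := (σ x).isLt
    omega
  · rw [Phi13_apply_ge _ _ x hx]
    have hval : ((Equiv.ofBijective _ (Finite.injective_iff_bijective.mp hbinj))
        ⟨(x : ℕ) - n, by have := x.isLt; omega⟩ : ℕ)
        = (σ ⟨n + ((⟨(x : ℕ) - n, by have := x.isLt; omega⟩ : Fin n) : ℕ),
            ltn2 ⟨(x : ℕ) - n, by have := x.isLt; omega⟩⟩ : ℕ) := rfl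
    have hxx : (⟨n + ((⟨(x : ℕ) - n, by have := x.isLt; omega⟩ : Fin n) : ℕ),
        ltn2 ⟨(x : ℕ) - n, by have := x.isLt; omega⟩⟩ : Fin (2 * n)) = x :=
      Fin.ext (by simp only [Fin.val_mk]; omega)
    rw [hval, hxx]

end Aux5
/-- For symmetric `f ∈ L²(ℝ₊ⁿ)` and `q ∈ (-1,1]`:
`Σ_{σ ∈ S_{2n}, σ({1,…,n}) ∩ {1,…,n} = ∅} q^{inv σ} ∫_{P₂(σ)} (f⊗f) ⊗ (f⊗f)
 = q^{n²} ⟨f,f⟩_q²`. -/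
theorem stmt13 (n : ℕ) (hn : 1 ≤ n) (q : ℝ) (hq₁ : -1 < q) (hq₂ : q ≤ 1)
    (f : (Fin n → ℝ) → ℝ) (hf : MemLp f 2 (μn n)) (hsym : SymmFn f) :
    ∑ σ ∈ Finset.univ.filter (fun σ : Equiv.Perm (Fin (2 * n)) =>
        ((Finset.univ.filter fun i : Fin (2 * n) => (i : ℕ) < n).image (fun i => σ i)) ∩
          (Finset.univ.filter fun i : Fin (2 * n) => (i : ℕ) < n) = ∅),
      q ^ invCount (fun i => σ i) *
        P2Integral (2 * n) σ
          (fun t => f (fun i => gv t (i : ℕ)) * f (fun i => gv t (n + (i : ℕ))))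
          (fun t => f (fun i => gv t (i : ℕ)) * f (fun i => gv t (n + (i : ℕ)))) =
    q ^ (n ^ 2) * (qInner n q f f) ^ 2 := by
  classical
  have main : (∑ p : Equiv.Perm (Fin n) × Equiv.Perm (Fin n),
      q ^ invCount (fun i => Phi13 n p.1 p.2 i) *
        P2Integral (2 * n) (Phi13 n p.1 p.2)
          (fun t => f (fun i => gv t (i : ℕ)) * f (fun i => gv t (n + (i : ℕ))))
          (fun t => f (fun i => gv t (i : ℕ)) * f (fun i => gv t (n + (i : ℕ)))))
      = ∑ σ ∈ Finset.univ.filter (fun σ : Equiv.Perm (Fin (2 * n)) =>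
        ((Finset.univ.filter fun i : Fin (2 * n) => (i : ℕ) < n).image (fun i => σ i)) ∩
          (Finset.univ.filter fun i : Fin (2 * n) => (i : ℕ) < n) = ∅),
      q ^ invCount (fun i => σ i) *
        P2Integral (2 * n) σ
          (fun t => f (fun i => gv t (i : ℕ)) * f (fun i => gv t (n + (i : ℕ))))
          (fun t => f (fun i => gv t (i : ℕ)) * f (fun i => gv t (n + (i : ℕ)))) := by
    refine Finset.sum_nbij (fun p => Phi13 n p.1 p.2) ?_ ?_ ?_ (fun p _ => rfl)
    · intro p _
      exact Finset.mem_filter.mpr ⟨Finset.mem_univ _, Phi13_mem n p.1 p.2⟩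
    · intro p _ p' _ h
      obtain ⟨h1, h2⟩ := Phi13_inj h
      exact Prod.ext h1 h2
    · intro σ hσ
      have hσ' := (Finset.mem_filter.mp (Finset.mem_coe.mp hσ)).2
      obtain ⟨a, b, hab⟩ := Phi13_surj σ hσ'
      exact ⟨(a, b), Finset.mem_coe.mpr (Finset.mem_univ _), hab⟩
  rw [← main]
  have step : ∀ p : Equiv.Perm (Fin n) × Equiv.Perm (Fin n),
      q ^ invCount (fun i => Phi13 n p.1 p.2 i) *
        P2Integral (2 * n) (Phi13 n p.1 p.2)
          (fun t => f (fun i => gv t (i : ℕ)) * f (fun i => gv t (n + (i : ℕ))))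
          (fun t => f (fun i => gv t (i : ℕ)) * f (fun i => gv t (n + (i : ℕ))))
      = (q ^ (n * n) * ((∫ t, f t * f t ∂ μn n) * ∫ t, f t * f t ∂ μn n)) *
          (q ^ invCount (fun i => p.1 i) * q ^ invCount (fun i => p.2 i)) := by
    intro p
    rw [invCount_Phi13, P2term f hsym p.1 p.2, pow_add, pow_add]
    ring
  rw [Finset.sum_congr rfl (fun p _ => step p), ← Finset.mul_sum]
  rw [Fintype.sum_prod_type]
  have redux : (∑ x : Equiv.Perm (Fin n), ∑ y : Equiv.Perm (Fin n),
      (q ^ invCount fun i => (x, y).1 i) * q ^ invCount fun i => (x, y).2 i)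
      = ∑ x : Equiv.Perm (Fin n), ∑ y : Equiv.Perm (Fin n),
      (q ^ invCount fun i => x i) * q ^ invCount fun i => y i := rfl
  rw [redux, ← Finset.sum_mul_sum]
  rw [qInner_eq q f hsym]
  rw [show n ^ 2 = n * n from pow_two n]
  ring
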